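/- Let F : M₂ → M₂ be a C² function satisfying the M₂-holomorphy equations ∂₀F = σ·∂₁F whose restriction to the time axis vanishes: F(0 + y·(time direction)) = 0 for all y. Then F ≡ 0. Equivalently: if P, Q : ℝ² → ℝ are C² with ∂ₓP = ∂_yQ, ∂_yP = ∂ₓQ, and P(0,y) = Q(0,y) = 0 for all y, then P = Q = 0. -/

import Mathlib

/-- Partial derivative of a scalar field in the first coordinate. -/
noncomputable def pdx (f : ℝ × ℝ → ℝ) (p : ℝ × ℝ) : ℝ := deriv (fun x => f (x, p.2)) p.1

/-- Partial derivative of a scalar field in the second coordinate. -/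
noncomputable def pdy (f : ℝ × ℝ → ℝ) (p : ℝ × ℝ) : ℝ := deriv (fun y => f (p.1, y)) p.2

lemma pdx_eq_fderiv (f : ℝ × ℝ → ℝ) (hf : Differentiable ℝ f) (p : ℝ × ℝ) :
    pdx f p = fderiv ℝ f p (1, 0) := by
  have hγ : HasDerivAt (fun x : ℝ => ((x, p.2) : ℝ × ℝ)) ((1 : ℝ), (0 : ℝ)) p.1 :=
    (hasDerivAt_id p.1).prodMk (hasDerivAt_const p.1 p.2)
  have h := (hf (p.1, p.2)).hasFDerivAt.comp_hasDerivAt p.1 hγ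
  simp only [Prod.mk.eta] at h
  exact h.deriv

lemma pdy_eq_fderiv (f : ℝ × ℝ → ℝ) (hf : Differentiable ℝ f) (p : ℝ × ℝ) :
    pdy f p = fderiv ℝ f p (0, 1) := by
  have hγ : HasDerivAt (fun y : ℝ => ((p.1, y) : ℝ × ℝ)) ((0 : ℝ), (1 : ℝ)) p.2 :=
    (hasDerivAt_const p.2 p.1).prodMk (hasDerivAt_id p.2)
  have h := (hf (p.1, p.2)).hasFDerivAt.comp_hasDerivAt p.2 hγ
  simp only [Prod.mk.eta] at h
  exact h.deriv

/-- A differentiable function satisfying the transport equation pdx f = a * pdy f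
which vanishes on the axis x = 0 vanishes identically. -/
lemma transport_vanish (f : ℝ × ℝ → ℝ) (hf : Differentiable ℝ f) (a : ℝ)
    (hd : ∀ p, pdx f p = a * pdy f p)
    (h0 : ∀ y, f (0, y) = 0) : ∀ p, f p = 0 := by
  rintro ⟨x, y⟩
  set c := y + a * x with hc
  set γ : ℝ → ℝ × ℝ := fun t => (t, c - a * t) with hγdef
  have hφ : ∀ t, HasDerivAt (fun t => f (γ t)) 0 t := by
    intro t
    have hγ : HasDerivAt γ ((1 : ℝ), -a) t := by
      have h2 : HasDerivAt (fun t : ℝ => c - a * t) (-a) t := by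
        simpa using ((hasDerivAt_id t).const_mul a).const_sub c
      exact (hasDerivAt_id t).prodMk h2
    have h := (hf (γ t)).hasFDerivAt.comp_hasDerivAt t hγ
    have e1 : pdx f (γ t) = fderiv ℝ f (γ t) (1, 0) := pdx_eq_fderiv f hf _
    have e2 : pdy f (γ t) = fderiv ℝ f (γ t) (0, 1) := pdy_eq_fderiv f hf _
    have hv : ((1 : ℝ), -a) = ((1:ℝ), (0:ℝ)) + (-a) • ((0:ℝ), (1:ℝ)) := by
      simp [Prod.ext_iff]
    rw [hv, map_add, map_smul] at h
    have hde := hd (γ t)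
    rw [e1, e2] at hde
    have : fderiv ℝ f (γ t) (1, 0) + (-a) • fderiv ℝ f (γ t) (0, 1) = 0 := by
      rw [hde, smul_eq_mul]; ring
    rwa [this] at h
  have hconst : ∀ s t : ℝ, f (γ s) = f (γ t) := by
    have hdφ : Differentiable ℝ (fun t => f (γ t)) := fun t => (hφ t).differentiableAt
    have hz : ∀ t, deriv (fun t => f (γ t)) t = 0 := fun t => (hφ t).deriv
    exact fun s t => is_const_of_deriv_eq_zero hdφ hz s t
  have h1 : γ x = (x, y) := by simp [hγdef, hc]
  have h2 : γ 0 = (0, c) := by simp [hγdef]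
  calc f (x, y) = f (γ x) := by rw [h1]
    _ = f (γ 0) := hconst x 0
    _ = 0 := by rw [h2]; exact h0 c

/-- A C² solution of the M₂-Cauchy-Riemann system vanishing on the axis x = 0
vanishes identically. -/
theorem holomorphic_vanishing_on_axis (P Q : ℝ × ℝ → ℝ)
    (hP : ContDiff ℝ 2 P) (hQ : ContDiff ℝ 2 Q)
    (h1 : ∀ p, pdx P p = pdy Q p) (h2 : ∀ p, pdy P p = pdx Q p)
    (haxis : ∀ y : ℝ, P (0, y) = 0 ∧ Q (0, y) = 0) :
    ∀ p : ℝ × ℝ, P p = 0 ∧ Q p = 0 := by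
  have hPd : Differentiable ℝ P := hP.differentiable (by norm_num)
  have hQd : Differentiable ℝ Q := hQ.differentiable (by norm_num)
  -- rewrite hypotheses in fderiv form
  have h1' : ∀ p, fderiv ℝ P p (1, 0) = fderiv ℝ Q p (0, 1) := by
    intro p
    rw [← pdx_eq_fderiv P hPd, ← pdy_eq_fderiv Q hQd]; exact h1 p
  have h2' : ∀ p, fderiv ℝ P p (0, 1) = fderiv ℝ Q p (1, 0) := by
    intro p
    rw [← pdy_eq_fderiv P hPd, ← pdx_eq_fderiv Q hQd]; exact h2 p
  set f : ℝ × ℝ → ℝ := fun p => P p + Q p with hfdef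
  set g : ℝ × ℝ → ℝ := fun p => P p - Q p with hgdef
  have hfd : Differentiable ℝ f := hPd.add hQd
  have hgd : Differentiable ℝ g := hPd.sub hQd
  have hfF : ∀ p (v : ℝ × ℝ), fderiv ℝ f p v = fderiv ℝ P p v + fderiv ℝ Q p v := by
    intro p v
    rw [hfdef, fderiv_fun_add (hPd p) (hQd p)]; rfl
  have hgF : ∀ p (v : ℝ × ℝ), fderiv ℝ g p v = fderiv ℝ P p v - fderiv ℝ Q p v := by
    intro p v
    rw [hgdef, fderiv_fun_sub (hPd p) (hQd p)]; rfl
  have hfz : ∀ p, f p = 0 := by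
    apply transport_vanish f hfd 1
    · intro p
      rw [pdx_eq_fderiv f hfd, pdy_eq_fderiv f hfd, hfF, hfF, h1' p, h2' p, one_mul]
      ring
    · intro y; simp [hfdef, (haxis y).1, (haxis y).2]
  have hgz : ∀ p, g p = 0 := by
    apply transport_vanish g hgd (-1)
    · intro p
      rw [pdx_eq_fderiv g hgd, pdy_eq_fderiv g hgd, hgF, hgF, h1' p, h2' p]
      ring
    · intro y; simp [hgdef, (haxis y).1, (haxis y).2]
  intro p
  have hf := hfz p
  have hg := hgz p
  simp only [hfdef, hgdef] at hf hg
  constructor <;> linarith
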